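/- Let Δ > 0 and fix a real r with 0 ≤ r < Δ. Then the error ratio Q⁻(i, r) is monotonically nondecreasing as a function of i on the set of reals i ≤ −1: for all i₁ ≤ i₂ ≤ −1, Q⁻(i₁, r) ≤ Q⁻(i₂, r). -/

import Mathlib

/-- Φ⁻(x) = log₂(1 − 2^x) -/
noncomputable def Phim (x : ℝ) : ℝ := Real.logb 2 (1 - (2:ℝ) ^ x)

/-- (Φ⁻)'(x) = −2^x / (1 − 2^x) -/
noncomputable def dPhim (x : ℝ) : ℝ := -(2:ℝ) ^ x / (1 - (2:ℝ) ^ x)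

/-- First-order Taylor remainder E⁻(i, r) -/
noncomputable def Em (i r : ℝ) : ℝ := Phim (i - r) - Phim i + r * dPhim i

/-- Error ratio Q⁻(i, r) = E⁻(i, r)/E⁻(i, Δ) -/
noncomputable def Qm (Δ i r : ℝ) : ℝ := Em i r / Em i Δ

noncomputable def Gm (i t : ℝ) : ℝ := dPhim (i - t) - dPhim i

lemma two_rpow_pos (x : ℝ) : 0 < (2:ℝ) ^ x := Real.rpow_pos_of_pos two_pos x

lemma two_rpow_lt_one {x : ℝ} (hx : x < 0) : (2:ℝ) ^ x < 1 :=
  Real.rpow_lt_one_of_one_lt_of_neg one_lt_two hx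

lemma two_rpow_le_one {x : ℝ} (hx : x ≤ 0) : (2:ℝ) ^ x ≤ 1 :=
  Real.rpow_le_one_of_one_le_of_nonpos one_le_two hx

lemma continuous_two_rpow : Continuous fun x : ℝ => (2:ℝ) ^ x := by
  have h : (fun x : ℝ => (2:ℝ) ^ x) = fun x => Real.exp (Real.log 2 * x) := by
    funext x; rw [Real.rpow_def_of_pos two_pos]
  rw [h]
  exact Real.continuous_exp.comp (continuous_const.mul continuous_id)

lemma hasDerivAt_Phim {x : ℝ} (hx : x < 0) : HasDerivAt Phim (dPhim x) x := by
  have hlt : (2:ℝ) ^ x < 1 := two_rpow_lt_one hx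
  have hne : 1 - (2:ℝ) ^ x ≠ 0 := by linarith
  have h1 : HasDerivAt (fun y : ℝ => (2:ℝ) ^ y) ((2:ℝ) ^ x * Real.log 2) x :=
    (Real.hasStrictDerivAt_const_rpow two_pos x).hasDerivAt
  have h2 : HasDerivAt (fun y : ℝ => 1 - (2:ℝ) ^ y) (-((2:ℝ) ^ x * Real.log 2)) x :=
    h1.const_sub 1
  have h3 := (h2.log hne).div_const (Real.log 2)
  have hP : Phim = fun y => Real.log (1 - (2:ℝ) ^ y) / Real.log 2 := by
    funext y; simp [Phim, Real.logb]
  rw [hP]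
  refine h3.congr_deriv ?_
  have hl2 : Real.log 2 ≠ 0 := ne_of_gt (Real.log_pos one_lt_two)
  unfold dPhim
  field_simp

lemma Gm_eq {i t : ℝ} (hi : i < 0) (ht : 0 ≤ t) :
    Gm i t = (2:ℝ) ^ i * (1 - (2:ℝ) ^ (-t)) /
      ((1 - (2:ℝ) ^ i * (2:ℝ) ^ (-t)) * (1 - (2:ℝ) ^ i)) := by
  have hsplit : (2:ℝ) ^ (i - t) = (2:ℝ) ^ i * (2:ℝ) ^ (-t) := by
    rw [sub_eq_add_neg, Real.rpow_add two_pos]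
  have hu : (2:ℝ) ^ i < 1 := two_rpow_lt_one hi
  have hup : (2:ℝ) ^ (i - t) < 1 := two_rpow_lt_one (by linarith)
  have h1 : 1 - (2:ℝ) ^ i ≠ 0 := by linarith
  have h2 : 1 - (2:ℝ) ^ i * (2:ℝ) ^ (-t) ≠ 0 := by rw [← hsplit]; linarith
  unfold Gm dPhim
  rw [hsplit]
  field_simp
  ring

lemma Gm_nonneg {i t : ℝ} (hi : i < 0) (ht : 0 ≤ t) : 0 ≤ Gm i t := by
  rw [Gm_eq hi ht]
  have hu0 : 0 < (2:ℝ) ^ i := two_rpow_pos i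
  have hu : (2:ℝ) ^ i < 1 := two_rpow_lt_one hi
  have hp0 : 0 < (2:ℝ) ^ (-t) := two_rpow_pos (-t)
  have hp1 : (2:ℝ) ^ (-t) ≤ 1 := two_rpow_le_one (by linarith)
  have hup : (2:ℝ) ^ i * (2:ℝ) ^ (-t) < 1 := by nlinarith
  apply div_nonneg
  · nlinarith
  · exact (mul_pos (by linarith) (by linarith)).le

lemma Gm_pos {i t : ℝ} (hi : i < 0) (ht : 0 < t) : 0 < Gm i t := by
  rw [Gm_eq hi ht.le]
  have hu0 : 0 < (2:ℝ) ^ i := two_rpow_pos i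
  have hu : (2:ℝ) ^ i < 1 := two_rpow_lt_one hi
  have hp0 : 0 < (2:ℝ) ^ (-t) := two_rpow_pos (-t)
  have hp1 : (2:ℝ) ^ (-t) < 1 := two_rpow_lt_one (by linarith)
  have hup : (2:ℝ) ^ i * (2:ℝ) ^ (-t) < 1 := by nlinarith
  apply div_pos
  · nlinarith
  · exact mul_pos (by linarith) (by linarith)

/-- The key TP₂-type kernel inequality. -/
lemma Gm_kernel {i₁ i₂ t τ : ℝ} (h12 : i₁ ≤ i₂) (hi₂ : i₂ < 0)
    (ht : 0 ≤ t) (htτ : t ≤ τ) :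
    Gm i₁ t * Gm i₂ τ ≤ Gm i₂ t * Gm i₁ τ := by
  have hi₁ : i₁ < 0 := lt_of_le_of_lt h12 hi₂
  have hτ : 0 ≤ τ := le_trans ht htτ
  rw [Gm_eq hi₁ ht, Gm_eq hi₂ hτ, Gm_eq hi₂ ht, Gm_eq hi₁ hτ]
  set u₁ := (2:ℝ) ^ i₁ with hu₁def
  set u₂ := (2:ℝ) ^ i₂ with hu₂def
  set p := (2:ℝ) ^ (-t) with hpdef
  set q := (2:ℝ) ^ (-τ) with hqdef
  have hu₁0 : 0 < u₁ := two_rpow_pos i₁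
  have hu₂0 : 0 < u₂ := two_rpow_pos i₂
  have hu₁1 : u₁ < 1 := two_rpow_lt_one hi₁
  have hu₂1 : u₂ < 1 := two_rpow_lt_one hi₂
  have hu12 : u₁ ≤ u₂ := Real.rpow_le_rpow_left_iff one_lt_two |>.mpr h12
  have hq0 : 0 < q := two_rpow_pos (-τ)
  have hp1 : p ≤ 1 := two_rpow_le_one (by linarith)
  have hq1 : q ≤ 1 := two_rpow_le_one (by linarith)
  have hqp : q ≤ p := Real.rpow_le_rpow_left_iff one_lt_two |>.mpr (by linarith)
  have hd1 : 0 < 1 - u₁ * p := by nlinarith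
  have hd2 : 0 < 1 - u₂ * p := by nlinarith
  have hd3 : 0 < 1 - u₁ * q := by nlinarith
  have hd4 : 0 < 1 - u₂ * q := by nlinarith
  have hd5 : 0 < 1 - u₁ := by linarith
  have hd6 : 0 < 1 - u₂ := by linarith
  rw [div_mul_div_comm, div_mul_div_comm]
  have hnum : u₂ * (1 - p) * (u₁ * (1 - q)) = u₁ * (1 - p) * (u₂ * (1 - q)) := by ring
  rw [hnum]
  apply div_le_div_of_nonneg_left
  · have : 0 ≤ 1 - p := by linarith
    have : 0 ≤ 1 - q := by linarith
    positivity
  · positivity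
  · nlinarith [mul_nonneg (mul_nonneg hd5.le hd6.le)
      (mul_nonneg (sub_nonneg.2 hu12) (sub_nonneg.2 hqp))]

lemma continuousOn_Gm {i : ℝ} (hi : i < 0) : ContinuousOn (Gm i) (Set.Ici 0) := by
  have hc : Continuous fun t : ℝ => (2:ℝ) ^ (i - t) :=
    continuous_two_rpow.comp (continuous_const.sub continuous_id)
  have h1 : ContinuousOn (fun t => dPhim (i - t)) (Set.Ici 0) := by
    apply ContinuousOn.div hc.neg.continuousOn (continuous_const.sub hc).continuousOn
    intro t ht
    have htt : (0:ℝ) ≤ t := ht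
    have : (2:ℝ) ^ (i - t) < 1 := two_rpow_lt_one (by linarith)
    exact ne_of_gt (by show (0:ℝ) < 1 - (2:ℝ) ^ (i - t); linarith)
  exact h1.sub continuousOn_const

lemma intervalIntegrable_Gm {i a b : ℝ} (hi : i < 0) (ha : 0 ≤ a) (hb : 0 ≤ b) :
    IntervalIntegrable (Gm i) MeasureTheory.volume a b := by
  apply ContinuousOn.intervalIntegrable
  apply (continuousOn_Gm hi).mono
  exact fun x hx => le_trans (le_inf ha hb) hx.1

lemma Em_eq_integral {i r : ℝ} (hi : i < 0) (hr : 0 ≤ r) :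
    Em i r = -∫ t in (0:ℝ)..r, Gm i t := by
  have key : ∫ t in (0:ℝ)..r, Gm i t
      = (fun t => -Phim (i - t) - t * dPhim i) r - (fun t => -Phim (i - t) - t * dPhim i) 0 := by
    apply intervalIntegral.integral_eq_sub_of_hasDerivAt
    · intro t ht
      rw [Set.uIcc_of_le hr] at ht
      have hit : i - t < 0 := by linarith [ht.1]
      have h1 : HasDerivAt (fun s : ℝ => i - s) (-1) t := (hasDerivAt_id t).const_sub i
      have h2 := ((hasDerivAt_Phim hit).comp t h1).neg.sub
        ((hasDerivAt_id t).mul_const (dPhim i))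
      refine h2.congr_deriv ?_
      unfold Gm
      ring
    · exact intervalIntegrable_Gm hi le_rfl hr
  rw [key]
  simp [Em]
  ring

lemma ratio_step {A₁ A₂ C₁ C₂ g₁ g₂ : ℝ} (hA₂ : 0 ≤ A₂) (hC₂ : 0 ≤ C₂)
    (hg₂ : 0 < g₂) (hB₁ : 0 < A₁ + C₁) (hB₂ : 0 < A₂ + C₂)
    (keyA : A₁ * g₂ ≤ A₂ * g₁) (keyC : g₁ * C₂ ≤ g₂ * C₁) :
    A₁ / (A₁ + C₁) ≤ A₂ / (A₂ + C₂) := by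
  rw [div_le_div_iff₀ hB₁ hB₂]
  nlinarith [mul_le_mul_of_nonneg_right keyA hC₂, mul_le_mul_of_nonneg_left keyC hA₂, hg₂.le]

theorem stmt_11 (Δ : ℝ) (hΔ : 0 < Δ) (r : ℝ) (hr0 : 0 ≤ r) (hrΔ : r < Δ) :
    ∀ i₁ i₂ : ℝ, i₁ ≤ i₂ → i₂ ≤ -1 → Qm Δ i₁ r ≤ Qm Δ i₂ r := by
  intro i₁ i₂ h12 hi2
  have hi₂ : i₂ < 0 := lt_of_le_of_lt hi2 (by norm_num)
  have hi₁ : i₁ < 0 := lt_of_le_of_lt h12 hi₂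
  rcases eq_or_lt_of_le hr0 with hr | hr
  · have h0 : ∀ i : ℝ, Em i 0 = 0 := by intro i; simp [Em]
    simp [Qm, ← hr, h0]
  · -- r > 0
    have hint1A : IntervalIntegrable (Gm i₁) MeasureTheory.volume 0 r :=
      intervalIntegrable_Gm hi₁ le_rfl hr0
    have hint2A : IntervalIntegrable (Gm i₂) MeasureTheory.volume 0 r :=
      intervalIntegrable_Gm hi₂ le_rfl hr0
    have hint1C : IntervalIntegrable (Gm i₁) MeasureTheory.volume r Δ :=
      intervalIntegrable_Gm hi₁ hr0 hΔ.le
    have hint2C : IntervalIntegrable (Gm i₂) MeasureTheory.volume r Δ :=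
      intervalIntegrable_Gm hi₂ hr0 hΔ.le
    have hsplit1 : (∫ t in (0:ℝ)..r, Gm i₁ t) + (∫ t in r..Δ, Gm i₁ t)
        = ∫ t in (0:ℝ)..Δ, Gm i₁ t :=
      intervalIntegral.integral_add_adjacent_intervals hint1A hint1C
    have hsplit2 : (∫ t in (0:ℝ)..r, Gm i₂ t) + (∫ t in r..Δ, Gm i₂ t)
        = ∫ t in (0:ℝ)..Δ, Gm i₂ t :=
      intervalIntegral.integral_add_adjacent_intervals hint2A hint2C
    have hB₁ : 0 < (∫ t in (0:ℝ)..r, Gm i₁ t) + (∫ t in r..Δ, Gm i₁ t) := by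
      rw [hsplit1]
      exact intervalIntegral.intervalIntegral_pos_of_pos_on
        (intervalIntegrable_Gm hi₁ le_rfl hΔ.le) (fun x hx => Gm_pos hi₁ hx.1) hΔ
    have hB₂ : 0 < (∫ t in (0:ℝ)..r, Gm i₂ t) + (∫ t in r..Δ, Gm i₂ t) := by
      rw [hsplit2]
      exact intervalIntegral.intervalIntegral_pos_of_pos_on
        (intervalIntegrable_Gm hi₂ le_rfl hΔ.le) (fun x hx => Gm_pos hi₂ hx.1) hΔ
    have hA₂nn : 0 ≤ ∫ t in (0:ℝ)..r, Gm i₂ t :=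
      intervalIntegral.integral_nonneg hr0 (fun u hu => Gm_nonneg hi₂ hu.1)
    have hC₂nn : 0 ≤ ∫ t in r..Δ, Gm i₂ t :=
      intervalIntegral.integral_nonneg hrΔ.le
        (fun u hu => Gm_nonneg hi₂ (le_trans hr0 hu.1))
    have keyA : (∫ t in (0:ℝ)..r, Gm i₁ t) * Gm i₂ r
        ≤ (∫ t in (0:ℝ)..r, Gm i₂ t) * Gm i₁ r := by
      rw [← intervalIntegral.integral_mul_const, ← intervalIntegral.integral_mul_const]
      exact intervalIntegral.integral_mono_on hr0 (hint1A.mul_const _) (hint2A.mul_const _)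
        (fun x hx => Gm_kernel h12 hi₂ hx.1 hx.2)
    have keyC : Gm i₁ r * (∫ t in r..Δ, Gm i₂ t)
        ≤ Gm i₂ r * (∫ t in r..Δ, Gm i₁ t) := by
      rw [← intervalIntegral.integral_const_mul, ← intervalIntegral.integral_const_mul]
      exact intervalIntegral.integral_mono_on hrΔ.le (hint2C.const_mul _) (hint1C.const_mul _)
        (fun x hx => Gm_kernel h12 hi₂ hr0 hx.1)
    have hQ1 : Qm Δ i₁ r = (∫ t in (0:ℝ)..r, Gm i₁ t)
        / ((∫ t in (0:ℝ)..r, Gm i₁ t) + (∫ t in r..Δ, Gm i₁ t)) := by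
      rw [Qm, Em_eq_integral hi₁ hr0, Em_eq_integral hi₁ hΔ.le, ← hsplit1, neg_div_neg_eq]
    have hQ2 : Qm Δ i₂ r = (∫ t in (0:ℝ)..r, Gm i₂ t)
        / ((∫ t in (0:ℝ)..r, Gm i₂ t) + (∫ t in r..Δ, Gm i₂ t)) := by
      rw [Qm, Em_eq_integral hi₂ hr0, Em_eq_integral hi₂ hΔ.le, ← hsplit2, neg_div_neg_eq]
    rw [hQ1, hQ2]
    exact ratio_step hA₂nn hC₂nn (Gm_pos hi₂ hr) hB₁ hB₂ keyA keyC
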